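/- Let Q be a probability measure on (S³)^q, the q-fold product of the unit sphere in ℝ⁴, representing a random object Y = ([X¹], …, [X^q]) on (ℝP³)^q, and suppose that for each s = 1, …, q the matrix E[X^s (X^s)ᵀ] = ∫ x_s x_sᵀ Q(dx) has a simple smallest eigenvalue λ_s(1) with unit eigenvector γ_s(1). Then the Fréchet function F(p₁,…,p_q) = ∫ Σ_{s=1}^q ‖p_s p_sᵀ − x_s x_sᵀ‖₀² Q(dx) over q-tuples of unit vectors is maximized exactly at the tuples (ε₁ γ₁(1), …, ε_q γ_q(1)) with ε_s ∈ {+1, −1}; that is, the VW antimean of Q on (ℝP³)^q is the unique point αμ_{j_q} = ([γ₁(1)], …, [γ_q(1)]). -/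

import Mathlib

open Matrix MeasureTheory


lemma trace_vmv (a b : Fin 4 → ℝ) :
    Matrix.trace (vecMulVec a a * vecMulVec b b) = (a ⬝ᵥ b) ^ 2 := by
  simp only [Matrix.trace, Matrix.diag, Matrix.mul_apply, vecMulVec_apply, dotProduct, sq,
    Finset.mul_sum, Finset.sum_mul]
  rw [Finset.sum_comm]
  apply Finset.sum_congr rfl; intro i _
  apply Finset.sum_congr rfl; intro j _
  ring

lemma trace_sq (a b : Fin 4 → ℝ) :
    Matrix.trace ((vecMulVec a a - vecMulVec b b) * (vecMulVec a a - vecMulVec b b)) =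
      (a ⬝ᵥ a) ^ 2 + (b ⬝ᵥ b) ^ 2 - 2 * (a ⬝ᵥ b) ^ 2 := by
  simp only [sub_mul, mul_sub, Matrix.trace_sub, trace_vmv, dotProduct_comm b a]
  ring

abbrev Sph := {x : Fin 4 → ℝ // x ⬝ᵥ x = 1}

lemma coord_meas (q : ℕ) (s : Fin q) (i : Fin 4) :
    Measurable (fun x : Fin q → Sph => (x s).1 i) :=
  (measurable_pi_apply i).comp (measurable_subtype_coe.comp (measurable_pi_apply s))

lemma coord_bound (v : Fin 4 → ℝ) (hv : v ⬝ᵥ v = 1) (i : Fin 4) : |v i| ≤ 1 := by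
  rw [abs_le_one_iff_mul_self_le_one]
  calc v i * v i ≤ ∑ k, v k * v k :=
        Finset.single_le_sum (fun k _ => mul_self_nonneg (v k)) (Finset.mem_univ i)
    _ = 1 := hv

lemma g_integrable (q : ℕ) (Q : Measure (Fin q → Sph)) [IsProbabilityMeasure Q]
    (s : Fin q) (i j : Fin 4) :
    Integrable (fun x : Fin q → Sph => (x s).1 i * (x s).1 j) Q := by
  refine (integrable_const (1 : ℝ)).mono'
    (((coord_meas q s i).mul (coord_meas q s j)).aestronglyMeasurable)
    (ae_of_all _ fun x => ?_)
  rw [Real.norm_eq_abs, abs_mul]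
  calc |(x s).1 i| * |(x s).1 j| ≤ 1 * 1 :=
        mul_le_mul (coord_bound _ (x s).2 i) (coord_bound _ (x s).2 j)
          (abs_nonneg _) zero_le_one
    _ = 1 := one_mul 1

lemma frechet_val (q : ℕ) (Q : Measure (Fin q → Sph)) [IsProbabilityMeasure Q]
    (E : Fin q → Matrix (Fin 4) (Fin 4) ℝ)
    (hE : ∀ s i j, E s i j = ∫ x, ((x s).1 i) * ((x s).1 j) ∂Q)
    (p : Fin q → Fin 4 → ℝ) (hp : ∀ s, p s ⬝ᵥ p s = 1) :
    (∫ x, (∑ s, Matrix.trace ((vecMulVec (p s) (p s) - vecMulVec (x s).1 (x s).1) *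
        (vecMulVec (p s) (p s) - vecMulVec (x s).1 (x s).1))) ∂Q)
      = 2 * q - 2 * ∑ s, p s ⬝ᵥ (E s *ᵥ p s) := by
  have hpt : ∀ x : Fin q → Sph,
      (∑ s, Matrix.trace ((vecMulVec (p s) (p s) - vecMulVec (x s).1 (x s).1) *
        (vecMulVec (p s) (p s) - vecMulVec (x s).1 (x s).1)))
      = 2 * q - 2 * ∑ s, ∑ i, ∑ j, (p s i * p s j) * ((x s).1 i * (x s).1 j) := by
    intro x
    have hterm : ∀ s, Matrix.trace ((vecMulVec (p s) (p s) - vecMulVec (x s).1 (x s).1) *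
        (vecMulVec (p s) (p s) - vecMulVec (x s).1 (x s).1))
        = 2 - 2 * ∑ i, ∑ j, (p s i * p s j) * ((x s).1 i * (x s).1 j) := by
      intro s
      rw [trace_sq, hp s, (x s).2]
      have : (p s ⬝ᵥ (x s).1) ^ 2 = ∑ i, ∑ j, (p s i * p s j) * ((x s).1 i * (x s).1 j) := by
        rw [sq, dotProduct, Finset.sum_mul_sum]
        exact Finset.sum_congr rfl fun i _ => Finset.sum_congr rfl fun j _ => by ring
      rw [this]; ring
    simp only [hterm, Finset.sum_sub_distrib, Finset.sum_const, Finset.card_univ,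
      Fintype.card_fin, nsmul_eq_mul, ← Finset.mul_sum]
    ring
  simp only [hpt]
  have hint : Integrable (fun x : Fin q → Sph =>
      ∑ s, ∑ i, ∑ j, (p s i * p s j) * ((x s).1 i * (x s).1 j)) Q := by
    apply integrable_finset_sum; intro s _
    apply integrable_finset_sum; intro i _
    apply integrable_finset_sum; intro j _
    exact (g_integrable q Q s i j).const_mul _
  rw [integral_sub (integrable_const _) (hint.const_mul 2), integral_const,
    integral_const_mul, probReal_univ, one_smul]
  congr 1
  congr 1
  rw [integral_finset_sum _ fun s _ => by
    apply integrable_finset_sum; intro i _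
    apply integrable_finset_sum; intro j _
    exact (g_integrable q Q s i j).const_mul _]
  refine Finset.sum_congr rfl fun s _ => ?_
  rw [integral_finset_sum _ fun i _ => by
    apply integrable_finset_sum; intro j _
    exact (g_integrable q Q s i j).const_mul _]
  have : ∀ i, (∫ x, ∑ j, (p s i * p s j) * ((x s).1 i * (x s).1 j) ∂Q)
      = ∑ j, (p s i * p s j) * E s i j := by
    intro i
    rw [integral_finset_sum _ fun j _ => (g_integrable q Q s i j).const_mul _]
    exact Finset.sum_congr rfl fun j _ => by rw [integral_const_mul, ← hE]
  simp only [this]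
  have hmv : ∀ i, (E s *ᵥ p s) i = ∑ j, E s i j * p s j := fun i => rfl
  simp only [dotProduct, hmv, Finset.mul_sum]
  refine Finset.sum_congr rfl fun i _ => Finset.sum_congr rfl fun j _ => by ring


lemma quad_key {A : Matrix (Fin 4) (Fin 4) ℝ} (hA : A.IsHermitian) (lam : ℝ)
    (hlow : ∀ (c : ℝ) (w : Fin 4 → ℝ), w ≠ 0 → A *ᵥ w = c • w → lam ≤ c)
    (w : Fin 4 → ℝ) (hw : w ⬝ᵥ w = 1) :
    lam ≤ w ⬝ᵥ (A *ᵥ w) ∧ (w ⬝ᵥ (A *ᵥ w) = lam → A *ᵥ w = lam • w) := by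
  set b := hA.eigenvectorBasis with hb
  set μ := hA.eigenvalues with hμ
  have hT : Aᵀ = A := hA
  have hinner : ∀ u v : EuclideanSpace ℝ (Fin 4),
      inner (𝕜 := ℝ) u v = (u : Fin 4 → ℝ) ⬝ᵥ (v : Fin 4 → ℝ) := fun u v => by
    simp [PiLp.inner_apply, dotProduct, RCLike.inner_apply, mul_comm]
  set w' : EuclideanSpace ℝ (Fin 4) := WithLp.toLp 2 w with hw'
  set c : Fin 4 → ℝ := fun i => inner (𝕜 := ℝ) (b i) w' with hc
  have hbne : ∀ i, (b i : Fin 4 → ℝ) ≠ 0 := by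
    intro i h
    have : (b i : EuclideanSpace ℝ (Fin 4)) = 0 := (WithLp.ofLp_eq_zero 2).1 h
    exact b.toBasis.ne_zero i (by simpa using this)
  have heigv : ∀ i, A *ᵥ (b i : Fin 4 → ℝ) = μ i • (b i : Fin 4 → ℝ) :=
    fun i => hA.mulVec_eigenvectorBasis i
  have hμlow : ∀ i, lam ≤ μ i := fun i => hlow (μ i) _ (hbne i) (heigv i)
  have hcd : ∀ i, c i = (b i : Fin 4 → ℝ) ⬝ᵥ w := fun i => hinner (b i) w'
  have hbAw : ∀ i, inner (𝕜 := ℝ) (b i) (WithLp.toLp 2 (A *ᵥ w))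
      = μ i * c i := by
    intro i
    rw [hinner]
    simp only [WithLp.ofLp_toLp]
    have h1 : (b i : Fin 4 → ℝ) ⬝ᵥ (A *ᵥ w) = (A *ᵥ (b i : Fin 4 → ℝ)) ⬝ᵥ w := by
      rw [dotProduct_mulVec, ← mulVec_transpose, hT]
    rw [h1, heigv i, smul_dotProduct, ← hcd i, smul_eq_mul]
  have hsum1 : ∑ i, c i * c i = 1 := by
    have h := b.sum_inner_mul_inner w' w'
    rw [hinner w' w'] at h
    have h2 : ∀ i, inner (𝕜 := ℝ) w' (b i) = c i := fun i => real_inner_comm _ _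
    simp only [h2] at h
    simpa [hw, hw'] using h
  have hsum2 : w ⬝ᵥ (A *ᵥ w) = ∑ i, μ i * (c i * c i) := by
    have h := b.sum_inner_mul_inner w' (WithLp.toLp 2 (A *ᵥ w))
    rw [hinner] at h
    have h2 : ∀ i, inner (𝕜 := ℝ) w' (b i) = c i := fun i => real_inner_comm _ _
    simp only [h2, hbAw] at h
    simp only [hw', WithLp.ofLp_toLp] at h
    rw [← h]
    exact Finset.sum_congr rfl fun i _ => by ring
  have hlamsum : lam = ∑ i, lam * (c i * c i) := by
    rw [← Finset.mul_sum, hsum1, mul_one]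
  constructor
  · rw [hsum2, hlamsum]
    exact Finset.sum_le_sum fun i _ =>
      mul_le_mul_of_nonneg_right (hμlow i) (mul_self_nonneg _)
  · intro heq
    have hzero : ∑ i, (μ i - lam) * (c i * c i) = 0 := by
      have : ∑ i, (μ i - lam) * (c i * c i)
          = (∑ i, μ i * (c i * c i)) - ∑ i, lam * (c i * c i) := by
        rw [← Finset.sum_sub_distrib]
        exact Finset.sum_congr rfl fun i _ => by ring
      rw [this, ← hsum2, ← hlamsum, heq, sub_self]
    have hterm : ∀ i ∈ Finset.univ, (μ i - lam) * (c i * c i) = 0 :=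
      (Finset.sum_eq_zero_iff_of_nonneg fun i _ =>
        mul_nonneg (sub_nonneg.2 (hμlow i)) (mul_self_nonneg _)).1 hzero
    have hcoef : ∀ i, μ i * c i = lam * c i := by
      intro i
      rcases mul_eq_zero.1 (hterm i (Finset.mem_univ i)) with h | h
      · have : μ i = lam := by linarith [sub_eq_zero.1 h]
        rw [this]
      · have : c i = 0 := by
          rcases mul_eq_zero.1 h with h' | h' <;> exact h'
        rw [this, mul_zero, mul_zero]
    -- function-level representation
    have hrepr : w = ∑ i, c i • (b i : Fin 4 → ℝ) := by
      have h := b.sum_repr' w'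
      exact funext fun j => by
        have := congrFun (congrArg (fun z : EuclideanSpace ℝ (Fin 4) => (z : Fin 4 → ℝ)) h) j
        simpa [hw'] using this.symm
    calc A *ᵥ w = ∑ i, c i • (A *ᵥ (b i : Fin 4 → ℝ)) := by
          rw [hrepr]
          have h := map_sum (Matrix.mulVecLin A) (fun i => c i • (b i : Fin 4 → ℝ)) Finset.univ
          simp only [LinearMap.map_smul, Matrix.mulVecLin_apply] at h
          exact h
      _ = ∑ i, (lam * c i) • (b i : Fin 4 → ℝ) := by
          refine Finset.sum_congr rfl fun i _ => ?_
          rw [heigv i, smul_smul, mul_comm (c i) (μ i), hcoef i]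
      _ = lam • w := by
          rw [hrepr, Finset.smul_sum]
          exact Finset.sum_congr rfl fun i _ => by rw [smul_smul]


/-- Let `Q` be a probability measure on `(S³)^q` representing a random
object on `(ℝP³)^q`, and suppose for each `s` the second moment matrix
`E s = ∫ x_s x_sᵀ dQ` has a simple smallest eigenvalue `λ_s(1)` with unit eigenvector
`γ_s(1)`. Then the Fréchet function `F(p) = ∫ Σ_s ‖p_s p_sᵀ - x_s x_sᵀ‖₀² dQ` over
`q`-tuples of unit vectors is maximized exactly at the tuples `(ε₁ γ₁(1), …, ε_q γ_q(1))`
with `ε_s ∈ {±1}`; i.e. the VW antimean of `Q` is `([γ₁(1)], …, [γ_q(1)])`. -/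
theorem vw_antimean_projective_shape (q : ℕ)
    (Q : Measure (Fin q → {x : Fin 4 → ℝ // x ⬝ᵥ x = 1})) [IsProbabilityMeasure Q]
    (E : Fin q → Matrix (Fin 4) (Fin 4) ℝ)
    (hE : ∀ s i j, E s i j = ∫ x, ((x s).1 i) * ((x s).1 j) ∂Q)
    (lam : Fin q → ℝ) (γ : Fin q → Fin 4 → ℝ)
    (hγ : ∀ s, γ s ⬝ᵥ γ s = 1) (heig : ∀ s, E s *ᵥ γ s = lam s • γ s)
    (hmin : ∀ s, ∀ (c : ℝ) (w : Fin 4 → ℝ), w ≠ 0 → E s *ᵥ w = c • w → lam s ≤ c)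
    (hsimple : ∀ s, ∀ w : Fin 4 → ℝ, E s *ᵥ w = lam s • w → ∃ c : ℝ, w = c • γ s) :
    {p : Fin q → Fin 4 → ℝ | (∀ s, p s ⬝ᵥ p s = 1) ∧
        ∀ r : Fin q → Fin 4 → ℝ, (∀ s, r s ⬝ᵥ r s = 1) →
          (∫ x, (∑ s, Matrix.trace ((vecMulVec (r s) (r s) - vecMulVec (x s).1 (x s).1) *
              (vecMulVec (r s) (r s) - vecMulVec (x s).1 (x s).1))) ∂Q)
            ≤ ∫ x, (∑ s, Matrix.trace ((vecMulVec (p s) (p s) - vecMulVec (x s).1 (x s).1) *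
              (vecMulVec (p s) (p s) - vecMulVec (x s).1 (x s).1))) ∂Q}
      = {p : Fin q → Fin 4 → ℝ | ∃ ε : Fin q → ℝ, (∀ s, ε s = 1 ∨ ε s = -1) ∧
          p = fun s => ε s • γ s} := by
  have hHerm : ∀ s, (E s).IsHermitian := by
    intro s
    ext i j
    simp only [Matrix.conjTranspose_apply, star_trivial, hE s i j, hE s j i]
    exact integral_congr_ae (ae_of_all _ fun x => mul_comm _ _)
  -- value of quadratic form at γ
  have hγval : ∀ s, γ s ⬝ᵥ (E s *ᵥ γ s) = lam s := by
    intro s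
    rw [heig s, dotProduct_smul, smul_eq_mul, hγ s, mul_one]
  ext p
  simp only [Set.mem_setOf_eq]
  constructor
  · rintro ⟨hpu, hmax⟩
    -- compare with γ
    have hcomp := hmax γ hγ
    rw [frechet_val q Q E hE γ hγ, frechet_val q Q E hE p hpu] at hcomp
    have hsums : ∑ s, p s ⬝ᵥ (E s *ᵥ p s) ≤ ∑ s, lam s := by
      have := hcomp
      simp only [hγval] at this
      linarith
    have hle : ∀ s ∈ Finset.univ, lam s ≤ p s ⬝ᵥ (E s *ᵥ p s) :=
      fun s _ => (quad_key (hHerm s) (lam s) (hmin s) (p s) (hpu s)).1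
    have heqsum : ∑ s, lam s = ∑ s, p s ⬝ᵥ (E s *ᵥ p s) :=
      le_antisymm (Finset.sum_le_sum hle) hsums
    have heach : ∀ s ∈ Finset.univ, lam s = p s ⬝ᵥ (E s *ᵥ p s) :=
      (Finset.sum_eq_sum_iff_of_le hle).1 heqsum
    have hex : ∀ s, ∃ c : ℝ, (c = 1 ∨ c = -1) ∧ p s = c • γ s := by
      intro s
      have heq : p s ⬝ᵥ (E s *ᵥ p s) = lam s := (heach s (Finset.mem_univ s)).symm
      have hev := (quad_key (hHerm s) (lam s) (hmin s) (p s) (hpu s)).2 heq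
      obtain ⟨c, hc⟩ := hsimple s (p s) hev
      refine ⟨c, ?_, hc⟩
      have : (c • γ s) ⬝ᵥ (c • γ s) = 1 := by rw [← hc]; exact hpu s
      rw [smul_dotProduct, dotProduct_smul, hγ s] at this
      have hcc : c * c = 1 := by simpa using this
      exact mul_self_eq_one_iff.1 hcc
    choose ε hε1 hε2 using hex
    exact ⟨ε, hε1, funext hε2⟩
  · rintro ⟨ε, hε, rfl⟩
    have hone : ∀ s, ε s * ε s = 1 := by
      intro s; rcases hε s with h | h <;> rw [h] <;> norm_num
    have hpu : ∀ s, (ε s • γ s) ⬝ᵥ (ε s • γ s) = 1 := by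
      intro s
      rw [smul_dotProduct, dotProduct_smul, hγ s, smul_eq_mul, smul_eq_mul, mul_one, hone s]
    refine ⟨hpu, fun r hr => ?_⟩
    rw [frechet_val q Q E hE r hr, frechet_val q Q E hE _ hpu]
    have hval : ∀ s, (ε s • γ s) ⬝ᵥ (E s *ᵥ (ε s • γ s)) = lam s := by
      intro s
      rw [Matrix.mulVec_smul, smul_dotProduct, dotProduct_smul, hγval s, smul_eq_mul,
        smul_eq_mul, ← mul_assoc, hone s, one_mul]
    have hbd : ∀ s ∈ Finset.univ, lam s ≤ r s ⬝ᵥ (E s *ᵥ r s) :=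
      fun s _ => (quad_key (hHerm s) (lam s) (hmin s) (r s) (hr s)).1
    have : ∑ s, lam s ≤ ∑ s, r s ⬝ᵥ (E s *ᵥ r s) := Finset.sum_le_sum hbd
    simp only [hval]
    linarith
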